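/- Let G be a simple graph on a finite vertex type V, let k ≥ 1, and suppose no k-element subset of V is a dominating set of G. If S and T are k-element subsets of V such that S ∪ T is a dominating set of G, then the distance between S and T in the reduction graph G' is at least 3 (in particular S ≠ T and they have no common neighbor in G'). -/

import Mathlib

/-- `S` dominates `v` in `G` if `v ∈ S` or some element of `S` is adjacent to `v`. -/
def SimpleGraph.DominatesVert {V : Type*} (G : SimpleGraph V) (S : Finset V) (v : V) : Prop :=
  v ∈ S ∨ ∃ u ∈ S, G.Adj u v

/-- `S` is a dominating set of `G` if it dominates every vertex. -/
def SimpleGraph.IsDominatingSet {V : Type*} (G : SimpleGraph V) (S : Finset V) : Prop :=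
  ∀ v : V, G.DominatesVert S v

/-- The dominating-set-to-diameter reduction graph `G'`: its vertices are the `k`-element
subsets of `V` together with the elements of `V`; the elements of `V` form a clique; a
`k`-subset `S` is adjacent to a vertex `v ∈ V` iff `S` does not dominate `v`; two `k`-subsets
are never adjacent. -/
def SimpleGraph.reductionGraph {V : Type*} (G : SimpleGraph V) (k : ℕ) :
    SimpleGraph ({A : Finset V // A.card = k} ⊕ V) where
  Adj x y :=
    match x, y with
    | Sum.inl _, Sum.inl _ => False
    | Sum.inl S, Sum.inr v => ¬ G.DominatesVert S.1 v
    | Sum.inr v, Sum.inl S => ¬ G.DominatesVert S.1 v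
    | Sum.inr u, Sum.inr v => u ≠ v
  symm := by
    constructor
    rintro (S | u) (T | v) hadj
    · exact hadj
    · exact hadj
    · exact hadj
    · exact hadj.symm
  loopless := by
    constructor
    rintro (S | u) hadj
    · exact hadj
    · exact hadj rfl

/-- If no `k`-element subset of `V` is a dominating set of `G`, and `S`, `T` are `k`-element
subsets whose union is a dominating set of `G`, then the distance between `S` and `T` in the
reduction graph `G'` is at least `3`; in particular `S ≠ T` and `S`, `T` have no common
neighbor in `G'`. -/
theorem reduction_dist_ge_three_of_union_dominating {V : Type*} [Fintype V] [DecidableEq V]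
    (G : SimpleGraph V) (k : ℕ) (hk : 1 ≤ k)
    (hno : ∀ A : Finset V, A.card = k → ¬ G.IsDominatingSet A)
    (S T : Finset V) (hS : S.card = k) (hT : T.card = k)
    (hdom : G.IsDominatingSet (S ∪ T)) :
    3 ≤ (G.reductionGraph k).dist (Sum.inl ⟨S, hS⟩) (Sum.inl ⟨T, hT⟩) ∧
      S ≠ T ∧
      ¬ ∃ x : {A : Finset V // A.card = k} ⊕ V,
          (G.reductionGraph k).Adj (Sum.inl ⟨S, hS⟩) x ∧
          (G.reductionGraph k).Adj x (Sum.inl ⟨T, hT⟩) := by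
  classical
  have hneT : S ≠ T := by
    intro h
    subst h
    exact hno S hS (by simpa using hdom)
  have hnocommon : ¬ ∃ x : {A : Finset V // A.card = k} ⊕ V,
      (G.reductionGraph k).Adj (Sum.inl ⟨S, hS⟩) x ∧
      (G.reductionGraph k).Adj x (Sum.inl ⟨T, hT⟩) := by
    rintro ⟨(A | v), h1, h2⟩
    · exact h1
    · rcases hdom v with hv | ⟨u, hu, hadj⟩
      · rcases Finset.mem_union.1 hv with h | h
        · exact h1 (Or.inl h)
        · exact h2 (Or.inl h)
      · rcases Finset.mem_union.1 hu with h | h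
        · exact h1 (Or.inr ⟨u, h, hadj⟩)
        · exact h2 (Or.inr ⟨u, h, hadj⟩)
  refine ⟨?_, hneT, hnocommon⟩
  -- reachability
  have hSd := hno S hS
  have hTd := hno T hT
  simp only [SimpleGraph.IsDominatingSet, not_forall] at hSd hTd
  obtain ⟨v, hv⟩ := hSd
  obtain ⟨w, hw⟩ := hTd
  have h1 : (G.reductionGraph k).Adj (Sum.inl ⟨S, hS⟩) (Sum.inr v) := hv
  have h3 : (G.reductionGraph k).Adj (Sum.inr w) (Sum.inl ⟨T, hT⟩) := hw
  have hreach : (G.reductionGraph k).Reachable (Sum.inl ⟨S, hS⟩) (Sum.inl ⟨T, hT⟩) := by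
    refine h1.reachable.trans (SimpleGraph.Reachable.trans ?_ h3.reachable)
    by_cases hvw : v = w
    · subst hvw; rfl
    · exact SimpleGraph.Adj.reachable (by exact hvw)
  by_contra hlt
  push_neg at hlt
  obtain ⟨p, hp⟩ := hreach.exists_walk_length_eq_dist
  rw [← hp] at hlt
  cases p with
  | nil => exact hneT (by simpa using hneT rfl)
  | cons h q =>
    cases q with
    | nil => exact h
    | cons h' q' =>
      cases q' with
      | nil => exact hnocommon ⟨_, h, h'⟩
      | cons h'' q'' =>
        simp only [SimpleGraph.Walk.length_cons] at hlt
        omega
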